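/- The set \nabla_\infty is dense in \overline\nabla_\infty with respect to the product topology; that is, the closure of \nabla_\infty in ℝ^ℕ contains \overline\nabla_\infty. -/

import Mathlib

/-- The Kingman simplex: nonincreasing nonnegative sequences with sum at most 1. -/
def KingmanSimplex : Set (ℕ → ℝ) :=
  {x | (∀ i, x (i + 1) ≤ x i) ∧ (∀ i, 0 ≤ x i) ∧ Summable x ∧ ∑' i, x i ≤ 1}

/-- The subset of the Kingman simplex consisting of sequences summing to exactly 1. -/
def nablaInfty : Set (ℕ → ℝ) :=
  {x ∈ KingmanSimplex | ∑' i, x i = 1}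

/-- `∇_∞` is dense in `\overline∇_∞` for the product topology: the closure of
`∇_∞` in `ℝ^ℕ` contains `\overline∇_∞`. -/
theorem kingmanSimplex_subset_closure_nablaInfty :
    KingmanSimplex ⊆ closure nablaInfty := by
  rintro x ⟨hmono, hnonneg, hsum, hle⟩
  set s := ∑' i, x i with hs
  have hs0 : 0 ≤ 1 - s := by linarith
  -- the approximating sequence
  set c : ℕ → ℝ := fun m => (1 - s) / (m + 1) with hc
  have hcpos : ∀ m, 0 ≤ c m := fun m => by positivity
  set y : ℕ → ℕ → ℝ := fun m i => x i + (if i < m + 1 then c m else 0) with hy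
  have hg : ∀ m, Summable (fun i => if i < m + 1 then c m else 0) := by
    intro m
    apply summable_of_ne_finset_zero (s := Finset.range (m + 1))
    intro i hi
    simp [Finset.mem_range] at hi
    rw [if_neg (by omega)]
  have hsumg : ∀ m, (∑' i, if i < m + 1 then c m else 0) = 1 - s := by
    intro m
    rw [tsum_eq_sum (s := Finset.range (m + 1)) (by
      intro i hi
      simp [Finset.mem_range] at hi
      rw [if_neg (by omega)])]
    rw [Finset.sum_ite_of_true (by intro i hi; simpa using hi)]
    rw [Finset.sum_const, Finset.card_range, nsmul_eq_mul, hc]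
    field_simp
    push_cast; ring
  have hmem : ∀ m, y m ∈ nablaInfty := by
    intro m
    have hysum : Summable (y m) := hsum.add (hg m)
    have hytsum : ∑' i, y m i = 1 := by
      rw [hy]
      rw [Summable.tsum_add hsum (hg m), hsumg m, ← hs]
      ring
    refine ⟨⟨?_, ?_, hysum, hytsum.le⟩, hytsum⟩
    · intro i
      simp only [hy]
      by_cases h1 : i + 1 < m + 1
      · have h2 : i < m + 1 := Nat.lt_of_succ_lt h1
        rw [if_pos h1, if_pos h2]
        linarith [hmono i]
      · by_cases h2 : i < m + 1
        · rw [if_neg h1, if_pos h2]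
          linarith [hmono i, hcpos m]
        · rw [if_neg h1, if_neg h2]
          linarith [hmono i]
    · intro i
      have := hnonneg i
      by_cases h : i < m + 1 <;> simp only [hy, h, ↓reduceIte] <;> linarith [hcpos m]
  -- convergence
  have htend : Filter.Tendsto y Filter.atTop (nhds x) := by
    rw [tendsto_pi_nhds]
    intro i
    have hc0 : Filter.Tendsto c Filter.atTop (nhds 0) := by
      have : Filter.Tendsto (fun n : ℕ => (1 - s) / n) Filter.atTop (nhds 0) :=
        tendsto_const_div_atTop_nhds_zero_nat (1 - s)
      exact (this.comp (Filter.tendsto_add_atTop_nat 1)).congr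
        (fun a => by simp [Function.comp, hc])
    have heq : ∀ᶠ m in Filter.atTop, y m i = x i + c m := by
      filter_upwards [Filter.eventually_ge_atTop i] with m hm
      have : i < m + 1 := Nat.lt_succ_of_le hm
      simp only [hy, this, ↓reduceIte]
    have : Filter.Tendsto (fun m => x i + c m) Filter.atTop (nhds (x i)) := by
      simpa using (tendsto_const_nhds.add hc0)
    exact this.congr' (Filter.EventuallyEq.symm heq)
  exact mem_closure_of_tendsto htend (Filter.Eventually.of_forall hmem)
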